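/- Let r ∈ ℝ^N with all r_k ≠ 0, v_k > 0, q ≥ 1. Then the infimum over σ ∈ (0,∞)^N of ∑_k r_k²/σ_k + (∑_k v_k^q σ_k^q)^{1/q} equals 2·(∑_k v_k^{q/(q+1)} |r_k|^{2q/(q+1)})^{(q+1)/(2q)} = 2‖V^{1/2}r‖_{2q/(q+1)}. -/

import Mathlib

open Finset


private lemma eq_of_log' {a b : ℝ} (ha : 0 < a) (hb : 0 < b)
    (h : Real.log a = Real.log b) : a = b := by
  rw [← Real.exp_log ha, ← Real.exp_log hb, h]

private lemma spice_lower (N : ℕ) (r v σ : Fin N → ℝ) (q : ℝ)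
    (hr : ∀ k, r k ≠ 0) (hv : ∀ k, 0 < v k) (hσ : ∀ k, 0 < σ k) (hq : 1 ≤ q) :
    2 * (∑ k, (v k) ^ (q / (q + 1)) * |r k| ^ (2 * q / (q + 1))) ^ ((q + 1) / (2 * q)) ≤
      ∑ k, (r k) ^ 2 / σ k + (∑ k, (v k) ^ q * (σ k) ^ q) ^ (1 / q) := by
  have hq0 : 0 < q := lt_of_lt_of_le one_pos hq
  have hq1 : (0:ℝ) < q + 1 := by linarith
  set A := ∑ k, (r k) ^ 2 / σ k with hA
  set Bq := ∑ k, (v k) ^ q * (σ k) ^ q with hBq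
  set C := ∑ k, (v k) ^ (q/(q+1)) * |r k| ^ (2*q/(q+1)) with hC
  have hA0 : 0 ≤ A := sum_nonneg fun k _ => div_nonneg (sq_nonneg _) (hσ k).le
  have hBq0 : 0 ≤ Bq := sum_nonneg fun k _ =>
    mul_nonneg (Real.rpow_nonneg (hv k).le _) (Real.rpow_nonneg (hσ k).le _)
  have hC0 : 0 ≤ C := sum_nonneg fun k _ =>
    mul_nonneg (Real.rpow_nonneg (hv k).le _) (Real.rpow_nonneg (abs_nonneg _) _)
  have hconj : ((q+1)/q).HolderConjugate (q+1) :=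
    (Real.holderConjugate_iff_eq_conjExponent (by rw [lt_div_iff₀ hq0]; linarith)).mpr
      (by field_simp; ring)
  have holder := Real.inner_le_Lp_mul_Lq_of_nonneg (s := Finset.univ)
      (f := fun k => ((r k)^2 / σ k) ^ (q/(q+1)))
      (g := fun k => ((v k)^q * (σ k)^q) ^ (1/(q+1))) hconj
      (fun k _ => Real.rpow_nonneg (div_nonneg (sq_nonneg _) (hσ k).le) _)
      (fun k _ => Real.rpow_nonneg (mul_nonneg (Real.rpow_nonneg (hv k).le _)
        (Real.rpow_nonneg (hσ k).le _)) _)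
  have habs : ∀ k, 0 < |r k| := fun k => abs_pos.mpr (hr k)
  have hrw1 : ∀ k : Fin N, ((r k)^2 / σ k) ^ (q/(q+1)) * ((v k)^q * (σ k)^q) ^ (1/(q+1))
      = (v k) ^ (q/(q+1)) * |r k| ^ (2*q/(q+1)) := by
    intro k
    have hx := habs k; have hs := hσ k; have hw := hv k
    have h2 : (r k)^2 = |r k|^2 := (sq_abs _).symm
    rw [h2]
    apply eq_of_log' (by positivity) (by positivity)
    rw [Real.log_mul (by positivity) (by positivity),
        Real.log_mul (by positivity) (by positivity),
        Real.log_rpow (by positivity), Real.log_rpow (by positivity),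
        Real.log_rpow hw, Real.log_rpow hx,
        Real.log_div (by positivity) (by positivity),
        Real.log_mul (by positivity) (by positivity),
        Real.log_pow, Real.log_rpow hw, Real.log_rpow hs]
    field_simp
    ring
  have hrw2 : ∀ k : Fin N, (((r k)^2 / σ k) ^ (q/(q+1))) ^ ((q+1)/q) = (r k)^2 / σ k := by
    intro k
    rw [← Real.rpow_mul (div_nonneg (sq_nonneg _) (hσ k).le),
        show q/(q+1) * ((q+1)/q) = 1 by field_simp, Real.rpow_one]
  have hrw3 : ∀ k : Fin N, (((v k)^q * (σ k)^q) ^ (1/(q+1))) ^ (q+1) = (v k)^q * (σ k)^q := by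
    intro k
    rw [← Real.rpow_mul (mul_nonneg (Real.rpow_nonneg (hv k).le _)
      (Real.rpow_nonneg (hσ k).le _)), one_div, inv_mul_cancel₀ hq1.ne', Real.rpow_one]
  rw [Finset.sum_congr rfl fun k _ => hrw1 k,
      Finset.sum_congr rfl fun k _ => hrw2 k,
      Finset.sum_congr rfl fun k _ => hrw3 k, one_div_div] at holder
  -- holder : C ≤ A ^ (q/(q+1)) * Bq ^ (1/(q+1))
  have key : C ^ ((q+1)/q) ≤ A * Bq ^ (1/q) := by
    calc C ^ ((q+1)/q) ≤ (A ^ (q/(q+1)) * Bq ^ (1/(q+1))) ^ ((q+1)/q) :=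
          Real.rpow_le_rpow hC0 holder (by positivity)
      _ = A * Bq ^ (1/q) := by
          rw [Real.mul_rpow (Real.rpow_nonneg hA0 _) (Real.rpow_nonneg hBq0 _),
              ← Real.rpow_mul hA0, ← Real.rpow_mul hBq0,
              show q/(q+1) * ((q+1)/q) = 1 by field_simp,
              show 1/(q+1) * ((q+1)/q) = 1/q by field_simp, Real.rpow_one]
  have hsq : 2 * C ^ ((q+1)/(2*q)) = 2 * Real.sqrt (C ^ ((q+1)/q)) := by
    rw [Real.sqrt_eq_rpow, ← Real.rpow_mul hC0]
    ring_nf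
  rw [hsq]
  have hB0 : 0 ≤ Bq ^ (1/q) := Real.rpow_nonneg hBq0 _
  have h1 : Real.sqrt (C ^ ((q+1)/q)) ≤ Real.sqrt (A * Bq ^ (1/q)) := Real.sqrt_le_sqrt key
  have h2 : 2 * Real.sqrt (A * Bq ^ (1/q)) ≤ A + Bq ^ (1/q) := by
    rw [Real.sqrt_mul hA0]
    nlinarith [sq_nonneg (Real.sqrt A - Real.sqrt (Bq ^ (1/q))), Real.sq_sqrt hA0,
      Real.sq_sqrt hB0, Real.sqrt_nonneg A, Real.sqrt_nonneg (Bq ^ (1/q))]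
  linarith
private lemma spice_attain (N : ℕ) (r v : Fin N → ℝ) (q : ℝ)
    (hr : ∀ k, r k ≠ 0) (hv : ∀ k, 0 < v k) (hq : 1 ≤ q) (hN : 0 < N) :
    ∃ σ : Fin N → ℝ, (∀ k, 0 < σ k) ∧
      ∑ k, (r k) ^ 2 / σ k + (∑ k, (v k) ^ q * (σ k) ^ q) ^ (1 / q)
        = 2 * (∑ k, (v k) ^ (q / (q + 1)) * |r k| ^ (2 * q / (q + 1))) ^ ((q + 1) / (2 * q)) := by
  have hq0 : 0 < q := lt_of_lt_of_le one_pos hq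
  have hq1 : (0:ℝ) < q + 1 := by linarith
  have habs : ∀ k, 0 < |r k| := fun k => abs_pos.mpr (hr k)
  set C := ∑ k, (v k) ^ (q/(q+1)) * |r k| ^ (2*q/(q+1)) with hC
  have hCpos : 0 < C := by
    apply Finset.sum_pos (fun k _ => by have := hv k; have := habs k; positivity)
    simpa [Finset.univ_nonempty_iff] using Fin.pos_iff_nonempty.mp hN
  refine ⟨fun k => C^((q-1)/(2*q)) * |r k| ^ ((2:ℝ)/(q+1)) * (v k) ^ (-(q/(q+1))),
    fun k => by have := habs k; have := hv k; positivity, ?_⟩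
  have h1 : ∀ k : Fin N, (r k)^2 /
      (C^((q-1)/(2*q)) * |r k| ^ ((2:ℝ)/(q+1)) * (v k) ^ (-(q/(q+1))))
      = C^(-((q-1)/(2*q))) * ((v k)^(q/(q+1)) * |r k|^(2*q/(q+1))) := by
    intro k
    have hx := habs k; have hw := hv k
    rw [(sq_abs (r k)).symm]
    apply eq_of_log' (by positivity) (by positivity)
    rw [Real.log_div (by positivity) (by positivity), Real.log_pow,
        Real.log_mul (by positivity) (by positivity),
        Real.log_mul (by positivity) (by positivity),
        Real.log_rpow hCpos, Real.log_rpow hx, Real.log_rpow hw,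
        Real.log_mul (by positivity) (by positivity),
        Real.log_rpow hCpos,
        Real.log_mul (by positivity) (by positivity),
        Real.log_rpow hw, Real.log_rpow hx]
    field_simp
    ring
  have h2 : ∀ k : Fin N, (v k)^q *
      (C^((q-1)/(2*q)) * |r k| ^ ((2:ℝ)/(q+1)) * (v k) ^ (-(q/(q+1))))^q
      = C^((q-1)/2) * ((v k)^(q/(q+1)) * |r k|^(2*q/(q+1))) := by
    intro k
    have hx := habs k; have hw := hv k
    apply eq_of_log' (by positivity) (by positivity)
    rw [Real.log_mul (by positivity) (by positivity),
        Real.log_rpow hw, Real.log_rpow (by positivity),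
        Real.log_mul (by positivity) (by positivity),
        Real.log_mul (by positivity) (by positivity),
        Real.log_rpow hCpos, Real.log_rpow hx, Real.log_rpow hw,
        Real.log_mul (by positivity) (by positivity),
        Real.log_rpow hCpos,
        Real.log_mul (by positivity) (by positivity),
        Real.log_rpow hw, Real.log_rpow hx]
    field_simp
    ring
  rw [Finset.sum_congr rfl fun k _ => h1 k, Finset.sum_congr rfl fun k _ => h2 k,
      ← Finset.mul_sum, ← Finset.mul_sum, ← hC]
  have t1 : C^(-((q-1)/(2*q))) * C = C^((q+1)/(2*q)) := by
    apply eq_of_log' (by positivity) (by positivity)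
    rw [Real.log_mul (by positivity) hCpos.ne', Real.log_rpow hCpos, Real.log_rpow hCpos]
    field_simp
    ring
  have t2 : (C^((q-1)/2) * C)^(1/q) = C^((q+1)/(2*q)) := by
    apply eq_of_log' (by positivity) (by positivity)
    rw [Real.log_rpow (by positivity), Real.log_mul (by positivity) hCpos.ne',
        Real.log_rpow hCpos, Real.log_rpow hCpos]
    field_simp
    ring
  rw [t1, t2]
  ring


/-- The infimum over `σ ∈ (0,∞)^N` of `∑ r_k²/σ_k + (∑ v_k^q σ_k^q)^{1/q}` equals
`2·(∑ v_k^{q/(q+1)} |r_k|^{2q/(q+1)})^{(q+1)/(2q)} = 2‖V^{1/2}r‖_{2q/(q+1)}`. -/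
theorem spice_sigma_infimum (N : ℕ) (r : Fin N → ℝ) (v : Fin N → ℝ) (q : ℝ)
    (hr : ∀ k, r k ≠ 0) (hv : ∀ k, 0 < v k) (hq : 1 ≤ q) :
    IsGLB {val : ℝ | ∃ σ : Fin N → ℝ, (∀ k, 0 < σ k) ∧
        val = ∑ k, (r k) ^ 2 / σ k + (∑ k, (v k) ^ q * (σ k) ^ q) ^ (1 / q)}
      (2 * (∑ k, (v k) ^ (q / (q + 1)) * |r k| ^ (2 * q / (q + 1))) ^ ((q + 1) / (2 * q))) ∧
    2 * (∑ k, (v k) ^ (q / (q + 1)) * |r k| ^ (2 * q / (q + 1))) ^ ((q + 1) / (2 * q)) =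
      2 * (∑ k, ((v k) ^ ((1:ℝ)/2) * |r k|) ^ (2 * q / (q + 1))) ^ ((q + 1) / (2 * q)) := by
  have hq0 : 0 < q := lt_of_lt_of_le one_pos hq
  have hq1 : (0:ℝ) < q + 1 := by linarith
  have habs : ∀ k, 0 < |r k| := fun k => abs_pos.mpr (hr k)
  constructor
  · apply IsLeast.isGLB
    constructor
    · rcases Nat.eq_zero_or_pos N with hN | hN
      · subst hN
        refine ⟨fun _ => 1, fun k => one_pos, ?_⟩
        rw [show ∀ f : Fin 0 → ℝ, ∑ k : Fin 0, f k = 0 from fun f => rfl,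
            show ∀ f : Fin 0 → ℝ, ∑ k : Fin 0, f k = 0 from fun f => rfl,
            show ∀ f : Fin 0 → ℝ, ∑ k : Fin 0, f k = 0 from fun f => rfl,
            Real.zero_rpow (show (q+1)/(2*q) ≠ 0 by positivity),
            Real.zero_rpow (show (1:ℝ)/q ≠ 0 by positivity)]
        ring
      · obtain ⟨σ, hσ, hval⟩ := spice_attain N r v q hr hv hq hN
        exact ⟨σ, hσ, hval.symm⟩
    · rintro x ⟨σ, hσ, rfl⟩
      exact spice_lower N r v σ q hr hv hσ hq
  · have hpt : ∀ k : Fin N, (v k) ^ (q/(q+1)) * |r k| ^ (2*q/(q+1))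
        = ((v k) ^ ((1:ℝ)/2) * |r k|) ^ (2*q/(q+1)) := by
      intro k
      have hx := habs k; have hw := hv k
      apply eq_of_log' (by positivity) (by positivity)
      rw [Real.log_mul (by positivity) (by positivity),
          Real.log_rpow hw, Real.log_rpow hx,
          Real.log_rpow (by positivity),
          Real.log_mul (by positivity) (by positivity), Real.log_rpow hw]
      ring
    rw [Finset.sum_congr rfl fun k _ => hpt k]
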